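/- arXiv:2509.15817 — 6 statements merged into one kernel-verified Lean document; each statement's English description precedes it below -/
import Mathlib

section
/- A twice continuously differentiable function f : ℝⁿ → ℝ satisfying, for some natural number R, ‖∇²f(x)‖_F ≤ p_R(‖x‖) and ‖∇f(x)‖ ≥ q_{R+1}(‖x‖) for all x — where p_R is a polynomial of degree R and q_{R+1} is a polynomial of degree R+1 with positive leading coefficient — is (L₀, L₁)-smooth for any L₁ > 0 and some L₀ > 0; that is, ‖∇²f(x)‖_F ≤ L₀ + L₁‖∇f(x)‖ for all x. -/
/-- If the Hessian norm of a `C²` function is bounded above by a polynomial of degree `R`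
in `‖x‖` and the gradient norm is bounded below by a polynomial of degree `R+1` in `‖x‖`
with positive leading coefficient, then `f` is `(L₀, L₁)`-smooth for any `L₁ > 0` and
some `L₀ > 0`. -/
theorem l0_l1_smoothness_of_polynomial_bounds (n : ℕ)
    (f : EuclideanSpace ℝ (Fin n) → ℝ) (hf : ContDiff ℝ 2 f)
    (R : ℕ) (p q : Polynomial ℝ) (hp : p.natDegree = R) (hq : q.natDegree = R + 1)
    (hqlead : 0 < q.leadingCoeff)
    (hH : ∀ x, ‖iteratedFDeriv ℝ 2 f x‖ ≤ p.eval ‖x‖)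
    (hg : ∀ x, ‖gradient f x‖ ≥ q.eval ‖x‖) :
    ∀ L₁ > 0, ∃ L₀ > 0, ∀ x, ‖iteratedFDeriv ℝ 2 f x‖ ≤ L₀ + L₁ * ‖gradient f x‖ := by
  intro L₁ hL₁
  set r : Polynomial ℝ := Polynomial.C L₁ * q - p with hr
  have hq0 : q ≠ 0 := by
    intro h; rw [h] at hq; simp at hq
  have hdq : q.degree = ((R + 1 : ℕ) : WithBot ℕ) := by
    rw [Polynomial.degree_eq_natDegree hq0, hq]
  have hdCq : (Polynomial.C L₁ * q).degree = ((R + 1 : ℕ) : WithBot ℕ) := by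
    rw [Polynomial.degree_C_mul (ne_of_gt hL₁), hdq]
  have hplt : p.degree < (Polynomial.C L₁ * q).degree := by
    rw [hdCq]
    calc p.degree ≤ ((R : ℕ) : WithBot ℕ) := by rw [← hp]; exact Polynomial.degree_le_natDegree
      _ < ((R + 1 : ℕ) : WithBot ℕ) := by exact_mod_cast Nat.lt_succ_self R
  have hdr : r.degree = ((R + 1 : ℕ) : WithBot ℕ) := by
    rw [hr, Polynomial.degree_sub_eq_left_of_degree_lt hplt, hdCq]
  have hlr : 0 ≤ r.leadingCoeff := by
    rw [hr, Polynomial.leadingCoeff_sub_of_degree_lt hplt, Polynomial.leadingCoeff_mul,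
      Polynomial.leadingCoeff_C]
    positivity
  have htend : Filter.Tendsto (fun t => r.eval t) Filter.atTop Filter.atTop :=
    r.tendsto_atTop_of_leadingCoeff_nonneg (by rw [hdr]; exact_mod_cast Nat.succ_pos R) hlr
  obtain ⟨M, hM⟩ := (htend.eventually_ge_atTop 0).exists_forall_of_atTop
  set M' : ℝ := max M 0 with hM'
  have hcomp : IsCompact (Set.Icc (0 : ℝ) M') := isCompact_Icc
  obtain ⟨t0, ht0, hmax⟩ := hcomp.exists_isMaxOn ⟨0, by simp [hM']⟩
    (Polynomial.continuous p).continuousOn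
  refine ⟨max (p.eval t0) 1, lt_of_lt_of_le one_pos (le_max_right _ _), fun x => ?_⟩
  rcases le_or_gt ‖x‖ M' with hx | hx
  · have h1 : p.eval ‖x‖ ≤ p.eval t0 := hmax ⟨norm_nonneg x, hx⟩
    have h2 : 0 ≤ L₁ * ‖gradient f x‖ := by positivity
    calc ‖iteratedFDeriv ℝ 2 f x‖ ≤ p.eval ‖x‖ := hH x
      _ ≤ max (p.eval t0) 1 := le_trans h1 (le_max_left _ _)
      _ ≤ max (p.eval t0) 1 + L₁ * ‖gradient f x‖ := by linarith
  · have hxM : M ≤ ‖x‖ := le_trans (le_max_left M 0) hx.le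
    have h0 : 0 ≤ r.eval ‖x‖ := hM ‖x‖ hxM
    have h1 : p.eval ‖x‖ ≤ L₁ * q.eval ‖x‖ := by
      simp only [hr, Polynomial.eval_sub, Polynomial.eval_mul, Polynomial.eval_C] at h0
      linarith
    have h2 : L₁ * q.eval ‖x‖ ≤ L₁ * ‖gradient f x‖ :=
      mul_le_mul_of_nonneg_left (hg x) hL₁.le
    calc ‖iteratedFDeriv ℝ 2 f x‖ ≤ p.eval ‖x‖ := hH x
      _ ≤ L₁ * ‖gradient f x‖ := le_trans h1 h2
      _ ≤ max (p.eval t0) 1 + L₁ * ‖gradient f x‖ := by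
          have : (0:ℝ) < max (p.eval t0) 1 := lt_of_lt_of_le one_pos (le_max_right _ _)
          linarith
end

section
/- The polynomial f(x, y) = (1/4)x⁴ + (1/4)y⁴ − (1/2)x²y² on ℝ² is not (L₀, L₁)-smooth: for every L₀, L₁ ≥ 0 there exists (x, y) ∈ ℝ² with ‖∇²f(x,y)‖_F > L₀ + L₁‖∇f(x,y)‖. Indeed ∇f(x,−x) = 0 while ‖∇²f(x,−x)‖_F = 4x² for all x ∈ ℝ. -/
lemma hasD1 (y x : ℝ) :
    HasDerivAt (fun t : ℝ => (1/4) * t^4 + (1/4) * y^4 - (1/2) * t^2 * y^2)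
      (x^3 - x*y^2) x := by
  have h1 := (hasDerivAt_pow 4 x).const_mul (1/4 : ℝ)
  have h2 := ((hasDerivAt_pow 2 x).const_mul (1/2 : ℝ)).mul_const (y^2)
  have h := (h1.add_const ((1/4) * y^4)).sub h2
  refine h.congr_deriv ?_
  push_cast; ring

lemma hasD2 (x y : ℝ) :
    HasDerivAt (fun t : ℝ => (1/4) * x^4 + (1/4) * t^4 - (1/2) * x^2 * t^2)
      (y^3 - x^2*y) y := by
  have h1 := (hasDerivAt_pow 4 y).const_mul (1/4 : ℝ)
  have h2 := ((hasDerivAt_pow 2 y).const_mul ((1/2 : ℝ) * x^2))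
  have h := ((hasDerivAt_const y ((1/4) * x^4)).add h1).sub h2
  refine h.congr_deriv ?_
  push_cast; ring

lemma hasD3 (y x : ℝ) : HasDerivAt (fun t : ℝ => t^3 - t*y^2) (3*x^2 - y^2) x := by
  have h := (hasDerivAt_pow 3 x).sub ((hasDerivAt_id x).mul_const (y^2))
  refine h.congr_deriv ?_; ring

lemma hasD4 (x y : ℝ) : HasDerivAt (fun t : ℝ => x^3 - x*t^2) (-2*x*y) y := by
  have h := (hasDerivAt_const y (x^3)).sub ((hasDerivAt_pow 2 y).const_mul x)
  refine h.congr_deriv ?_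
  push_cast; ring

lemma hasD5 (y x : ℝ) : HasDerivAt (fun t : ℝ => y^3 - t^2*y) (-2*x*y) x := by
  have h := (hasDerivAt_const x (y^3)).sub ((hasDerivAt_pow 2 x).mul_const y)
  refine h.congr_deriv ?_
  push_cast; ring

lemma hasD6 (x y : ℝ) : HasDerivAt (fun t : ℝ => t^3 - x^2*t) (3*y^2 - x^2) y := by
  have h := (hasDerivAt_pow 3 y).sub ((hasDerivAt_id y).const_mul (x^2))
  refine h.congr_deriv ?_
  push_cast; ring

/-- The polynomial `f(x,y) = x⁴/4 + y⁴/4 − x²y²/2` is not `(L₀,L₁)`-smooth: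
its gradient vanishes along `y = −x` while the Frobenius norm of its Hessian equals `4x²`
there. -/
theorem quartic_not_l0_l1_smooth :
    let f : ℝ → ℝ → ℝ := fun x y => (1/4) * x^4 + (1/4) * y^4 - (1/2) * x^2 * y^2
    let fx : ℝ → ℝ → ℝ := fun x y => deriv (fun t => f t y) x
    let fy : ℝ → ℝ → ℝ := fun x y => deriv (fun t => f x t) y
    let fxx : ℝ → ℝ → ℝ := fun x y => deriv (fun t => fx t y) x
    let fxy : ℝ → ℝ → ℝ := fun x y => deriv (fun t => fx x t) y
    let fyx : ℝ → ℝ → ℝ := fun x y => deriv (fun t => fy t y) x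
    let fyy : ℝ → ℝ → ℝ := fun x y => deriv (fun t => fy x t) y
    (∀ L₀ L₁ : ℝ, 0 ≤ L₀ → 0 ≤ L₁ → ∃ x y : ℝ,
      Real.sqrt (fxx x y ^ 2 + fxy x y ^ 2 + fyx x y ^ 2 + fyy x y ^ 2)
        > L₀ + L₁ * Real.sqrt (fx x y ^ 2 + fy x y ^ 2)) ∧
    (∀ x : ℝ, fx x (-x) = 0 ∧ fy x (-x) = 0 ∧
      Real.sqrt (fxx x (-x) ^ 2 + fxy x (-x) ^ 2 + fyx x (-x) ^ 2 + fyy x (-x) ^ 2)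
        = 4 * x ^ 2) := by
  intro f fx fy fxx fxy fyx fyy
  have hfx : ∀ x y : ℝ, fx x y = x^3 - x*y^2 := fun x y => (hasD1 y x).deriv
  have hfy : ∀ x y : ℝ, fy x y = y^3 - x^2*y := fun x y => (hasD2 x y).deriv
  have hfxx : ∀ x y : ℝ, fxx x y = 3*x^2 - y^2 := by
    intro x y
    have : (fun t => fx t y) = fun t : ℝ => t^3 - t*y^2 := funext fun t => hfx t y
    simp only [fxx, this]; exact (hasD3 y x).deriv
  have hfxy : ∀ x y : ℝ, fxy x y = -2*x*y := by
    intro x y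
    have : (fun t => fx x t) = fun t : ℝ => x^3 - x*t^2 := funext fun t => hfx x t
    simp only [fxy, this]; exact (hasD4 x y).deriv
  have hfyx : ∀ x y : ℝ, fyx x y = -2*x*y := by
    intro x y
    have : (fun t => fy t y) = fun t : ℝ => y^3 - t^2*y := funext fun t => hfy t y
    simp only [fyx, this]; exact (hasD5 y x).deriv
  have hfyy : ∀ x y : ℝ, fyy x y = 3*y^2 - x^2 := by
    intro x y
    have : (fun t => fy x t) = fun t : ℝ => t^3 - x^2*t := funext fun t => hfy x t
    simp only [fyy, this]; exact (hasD6 x y).deriv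
  have key : ∀ x : ℝ, fx x (-x) = 0 ∧ fy x (-x) = 0 ∧
      Real.sqrt (fxx x (-x) ^ 2 + fxy x (-x) ^ 2 + fyx x (-x) ^ 2 + fyy x (-x) ^ 2)
        = 4 * x ^ 2 := by
    intro x
    refine ⟨by rw [hfx]; ring, by rw [hfy]; ring, ?_⟩
    rw [hfxx, hfxy, hfyx, hfyy]
    have : (3*x^2 - (-x)^2)^2 + (-2*x*(-x))^2 + (-2*x*(-x))^2 + (3*(-x)^2 - x^2)^2
        = (4*x^2)^2 := by ring
    rw [this, Real.sqrt_sq (by positivity)]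
  refine ⟨?_, key⟩
  intro L₀ L₁ hL₀ hL₁
  refine ⟨L₀ + 1, -(L₀ + 1), ?_⟩
  obtain ⟨h1, h2, h3⟩ := key (L₀ + 1)
  rw [h1, h2, h3]
  simp only [ne_eq, OfNat.ofNat_ne_zero, not_false_eq_true, zero_pow, add_zero,
    Real.sqrt_zero, mul_zero]
  nlinarith
end

section
/- There do not exist constants L₀, L₁ ≥ 0 such that the function f(x) = exp(‖x‖²) on ℝⁿ satisfies ‖∇²f(x)‖ ≤ L₀ + L₁‖∇f(x)‖ for all x ∈ ℝⁿ. -/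
open Real

variable {n : ℕ}

noncomputable abbrev E (n : ℕ) := EuclideanSpace ℝ (Fin n)

lemma hasFDerivAt_f (x : E n) :
    HasFDerivAt (fun x : E n => Real.exp (‖x‖ ^ 2))
      ((2 * Real.exp (‖x‖ ^ 2)) • innerSL ℝ x) x := by
  have h1 : HasFDerivAt (fun x : E n => ‖x‖ ^ 2) (2 • innerSL ℝ x) x :=
    (hasStrictFDerivAt_norm_sq x).hasFDerivAt
  have h2 := (Real.hasDerivAt_exp (‖x‖ ^ 2)).comp_hasFDerivAt x h1
  refine h2.congr_fderiv ?_
  ext y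
  simp
  ring

lemma hasGradientAt_f (x : E n) :
    HasGradientAt (fun x : E n => Real.exp (‖x‖ ^ 2))
      ((2 * Real.exp (‖x‖ ^ 2)) • x) x := by
  rw [hasGradientAt_iff_hasFDerivAt]
  refine (hasFDerivAt_f x).congr_fderiv ?_
  ext y
  simp [inner_smul_left]

lemma fderiv_f : (fderiv ℝ (fun x : E n => Real.exp (‖x‖ ^ 2))) =
    fun x => (2 * Real.exp (‖x‖ ^ 2)) • innerSL ℝ x :=
  funext fun x => (hasFDerivAt_f x).fderiv

lemma second_deriv_f (x : E n) :
    iteratedFDeriv ℝ 2 (fun x : E n => Real.exp (‖x‖ ^ 2)) x ![x, x] =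
      Real.exp (‖x‖ ^ 2) * (2 * ‖x‖ ^ 2 + 4 * ‖x‖ ^ 4) := by
  rw [iteratedFDeriv_two_apply, fderiv_f]
  have hc : HasFDerivAt (fun y : E n => 2 * Real.exp (‖y‖ ^ 2))
      ((4 * Real.exp (‖x‖ ^ 2)) • innerSL ℝ x) x := by
    have := (hasFDerivAt_f x).const_mul 2
    refine this.congr_fderiv ?_
    ext y
    simp
    ring
  have hL : HasFDerivAt (fun y : E n => innerSL ℝ y)
      (innerSL ℝ (E := E n)) x := (innerSL ℝ (E := E n)).hasFDerivAt
  have h := hc.smul hL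
  rw [HasFDerivAt.fderiv (f := fun x : E n => (2 * Real.exp (‖x‖ ^ 2)) • innerSL ℝ x) h]
  simp only [Matrix.cons_val_zero, Matrix.cons_val_one, Matrix.head_cons,
    ContinuousLinearMap.add_apply, ContinuousLinearMap.smul_apply,
    ContinuousLinearMap.smulRight_apply, innerSL_apply_apply, real_inner_self_eq_norm_sq,
    smul_eq_mul]
  rw [innerSL_apply_apply, real_inner_self_eq_norm_sq]
  ring

/-- There do not exist `L₀, L₁ ≥ 0` such that `f(x) = exp(‖x‖²)` satisfies
`‖∇²f(x)‖ ≤ L₀ + L₁‖∇f(x)‖` for all `x`. -/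
theorem exp_norm_sq_not_l0_l1_smooth (n : ℕ) (hn : 1 ≤ n)
    (f : EuclideanSpace ℝ (Fin n) → ℝ) (hf : f = fun x => Real.exp (‖x‖ ^ 2)) :
    ¬ ∃ L₀ L₁ : ℝ, 0 ≤ L₀ ∧ 0 ≤ L₁ ∧
      ∀ x, ‖iteratedFDeriv ℝ 2 f x‖ ≤ L₀ + L₁ * ‖gradient f x‖ := by
  subst hf
  rintro ⟨L₀, L₁, hL₀, hL₁, h⟩
  set t : ℝ := L₀ + 2 * L₁ + 1 with ht_def
  have ht1 : (1:ℝ) ≤ t := by simp [ht_def]; linarith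
  have ht0 : (0:ℝ) < t := by linarith
  set e : EuclideanSpace ℝ (Fin n) := EuclideanSpace.single (⟨0, hn⟩ : Fin n) (1:ℝ) with he_def
  have he : ‖e‖ = 1 := by simp [he_def, EuclideanSpace.norm_single]
  set x : EuclideanSpace ℝ (Fin n) := t • e with hx_def
  have hx : ‖x‖ = t := by
    rw [hx_def, norm_smul, he, mul_one, Real.norm_eq_abs, abs_of_pos ht0]
  -- gradient norm
  have hgrad : gradient (fun x : EuclideanSpace ℝ (Fin n) => Real.exp (‖x‖ ^ 2)) x
      = (2 * Real.exp (t ^ 2)) • x := by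
    have := (hasGradientAt_f x).gradient
    rwa [hx] at this
  have hgradnorm : ‖gradient (fun x : EuclideanSpace ℝ (Fin n) => Real.exp (‖x‖ ^ 2)) x‖
      = 2 * Real.exp (t ^ 2) * t := by
    rw [hgrad, norm_smul, hx, Real.norm_eq_abs, abs_of_pos (by positivity)]
  -- second derivative lower bound
  have hE : (1:ℝ) ≤ Real.exp (t ^ 2) := Real.one_le_exp (sq_nonneg t)
  have hval : iteratedFDeriv ℝ 2 (fun x : EuclideanSpace ℝ (Fin n) => Real.exp (‖x‖ ^ 2)) x ![x, x]
      = Real.exp (t ^ 2) * (2 * t ^ 2 + 4 * t ^ 4) := by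
    rw [second_deriv_f x, hx]
  have hbound := (iteratedFDeriv ℝ 2 (fun x : EuclideanSpace ℝ (Fin n) => Real.exp (‖x‖ ^ 2)) x).le_opNorm ![x, x]
  rw [Fin.prod_univ_two] at hbound
  simp only [Matrix.cons_val_zero, Matrix.cons_val_one, Matrix.head_cons, hx] at hbound
  have hvalnorm : ‖iteratedFDeriv ℝ 2 (fun x : EuclideanSpace ℝ (Fin n) => Real.exp (‖x‖ ^ 2)) x ![x, x]‖
      = Real.exp (t ^ 2) * (2 * t ^ 2 + 4 * t ^ 4) := by
    rw [hval, Real.norm_eq_abs, abs_of_nonneg (by positivity)]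
  rw [hvalnorm] at hbound
  have hx2 := h x
  rw [hgradnorm] at hx2
  -- combine
  have key : Real.exp (t ^ 2) * (2 * t ^ 2 + 4 * t ^ 4)
      ≤ (L₀ + L₁ * (2 * Real.exp (t ^ 2) * t)) * (t * t) :=
    hbound.trans (by nlinarith)
  have h1 : L₀ ≤ t := by linarith
  have h2 : 2 * L₁ ≤ t := by linarith
  nlinarith [mul_le_mul_of_nonneg_right h1 (by positivity : (0:ℝ) ≤ t * t),
    mul_le_mul_of_nonneg_right h2 (by positivity : (0:ℝ) ≤ Real.exp (t ^ 2) * (t * t * t)),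
    mul_le_mul_of_nonneg_right hE (by positivity : (0:ℝ) ≤ t * t * t),
    mul_le_mul_of_nonneg_right ht1 (by positivity : (0:ℝ) ≤ Real.exp (t ^ 2) * (t * t * t)),
    sq_nonneg t, hE]
end

section
/- For the function f(x) = exp(‖x‖²) on ℝⁿ and any L ≥ 2, the matrix M_L(x) = (1 + ‖∇f(x)‖)·(I + ‖∇f(x)‖·xxᵀ/‖x‖²) − (2exp(‖x‖²)/L)·(I + 2xxᵀ) is positive semidefinite for all x ≠ 0; equivalently, f satisfies the second-order characterization of (L, 1)-anisotropic smoothness relative to φ(x) = −‖x‖ − ln(1 − ‖x‖). -/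
open scoped RealInnerProductSpace

lemma exp_norm_sq_gradient {n : ℕ} (x : EuclideanSpace ℝ (Fin n)) :
    HasGradientAt (fun x : EuclideanSpace ℝ (Fin n) => Real.exp (‖x‖ ^ 2))
      ((2 * Real.exp (‖x‖ ^ 2)) • x) x := by
  rw [hasGradientAt_iff_hasFDerivAt]
  have h1 : HasFDerivAt (fun x : EuclideanSpace ℝ (Fin n) => ‖x‖ ^ 2)
      (2 • (innerSL ℝ x)) x := (hasStrictFDerivAt_norm_sq x).hasFDerivAt
  have h2 := (Real.hasDerivAt_exp (‖x‖ ^ 2)).comp_hasFDerivAt x h1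
  refine h2.congr_fderiv ?_
  ext v
  simp [real_inner_smul_left, real_inner_smul_right]
  ring

/-- For `f(x) = exp(‖x‖²)` and `L ≥ 2`, the matrix
`M_L(x) = (1+‖∇f(x)‖)(I + ‖∇f(x)‖ xxᵀ/‖x‖²) − (2exp(‖x‖²)/L)(I + 2xxᵀ)` is positive
semidefinite for all `x ≠ 0` (stated via its quadratic form). -/
theorem exp_norm_sq_anisotropic_second_order (n : ℕ) (L : ℝ) (hL : 2 ≤ L)
    (f : EuclideanSpace ℝ (Fin n) → ℝ) (hf : f = fun x => Real.exp (‖x‖ ^ 2))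
    (x : EuclideanSpace ℝ (Fin n)) (hx : x ≠ 0) :
    ∀ v : EuclideanSpace ℝ (Fin n),
      0 ≤ (1 + ‖gradient f x‖) * (‖v‖ ^ 2 + ‖gradient f x‖ * ⟪x, v⟫ ^ 2 / ‖x‖ ^ 2)
          - (2 * Real.exp (‖x‖ ^ 2) / L) * (‖v‖ ^ 2 + 2 * ⟪x, v⟫ ^ 2) := by
  intro v
  have hgrad : gradient f x = (2 * Real.exp (‖x‖ ^ 2)) • x := by
    rw [hf]; exact (exp_norm_sq_gradient x).gradient
  set r : ℝ := ‖x‖ with hr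
  have hr0 : 0 < r := norm_pos_iff.mpr hx
  set e : ℝ := Real.exp (r ^ 2) with he
  have he1 : 1 ≤ e := by
    rw [he]; nlinarith [Real.add_one_le_exp (r ^ 2)]
  have he0 : 0 < e := lt_of_lt_of_le one_pos he1
  have hg : ‖gradient f x‖ = 2 * e * r := by
    rw [hgrad, norm_smul, Real.norm_eq_abs, abs_of_pos (by positivity)]
  have hL0 : (0:ℝ) < L := lt_of_lt_of_le two_pos hL
  set t : ℝ := ⟪x, v⟫
  set V : ℝ := ‖v‖ ^ 2
  have hV : 0 ≤ V := sq_nonneg _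
  have ht : 0 ≤ t ^ 2 := sq_nonneg _
  rw [hg]
  -- key scalar inequalities
  have hA : 2 * e / L ≤ 1 + 2 * e * r := by
    have h1 : 2 * e / L ≤ e := by
      rw [div_le_iff₀ hL0]; nlinarith
    have h2 : e ≤ 1 + 2 * e * r := by
      rcases le_or_gt 1 (2 * r) with h | h
      · nlinarith
      · have hb : 1 - 2 * r ≤ Real.exp (-(2 * r)) := by
          have := Real.add_one_le_exp (-(2 * r)); linarith
        have : e * (1 - 2 * r) ≤ e * Real.exp (-(2 * r)) :=
          mul_le_mul_of_nonneg_left hb (le_of_lt he0)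
        have hprod : e * Real.exp (-(2 * r)) = Real.exp (r ^ 2 - 2 * r) := by
          rw [he, ← Real.exp_add]; ring_nf
        have hle : Real.exp (r ^ 2 - 2 * r) ≤ 1 := by
          rw [show (1:ℝ) = Real.exp 0 from (Real.exp_zero).symm]
          apply Real.exp_le_exp.mpr
          nlinarith
        nlinarith
    linarith
  have hB : 4 * e / L ≤ (1 + 2 * e * r) * (2 * e * r) / r ^ 2 := by
    have h1 : 4 * e / L ≤ 2 * e := by
      rw [div_le_iff₀ hL0]; nlinarith
    have h2 : 2 * e ≤ (1 + 2 * e * r) * (2 * e * r) / r ^ 2 := by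
      rw [le_div_iff₀ (by positivity)]
      nlinarith [mul_nonneg (mul_nonneg (show (0:ℝ) ≤ 2*e-1 by linarith) he0.le) (sq_nonneg r),
        mul_nonneg (mul_nonneg he0.le he0.le) hr0.le, mul_nonneg he0.le hr0.le]
    linarith
  have key : (1 + 2 * e * r) * (V + 2 * e * r * t ^ 2 / r ^ 2)
      - 2 * e / L * (V + 2 * t ^ 2)
      = (1 + 2 * e * r - 2 * e / L) * V
        + ((1 + 2 * e * r) * (2 * e * r) / r ^ 2 - 4 * e / L) * t ^ 2 := by
    field_simp
    ring
  rw [key]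
  have : 0 ≤ (1 + 2 * e * r - 2 * e / L) * V := by
    apply mul_nonneg _ hV; linarith
  nlinarith [mul_nonneg (show 0 ≤ (1 + 2 * e * r) * (2 * e * r) / r ^ 2 - 4 * e / L by linarith) ht]
end

section
/- For the symmetric matrix factorization objective f(U) = (1/2)‖UUᵀ − Y‖_F², with Y ∈ 𝕊^{n×n} symmetric and U ∈ ℝ^{n×r}, the gradient ∇f(U) = (UUᵀ − Y)U satisfies ‖∇f(U)‖_F² ≥ (1/n²)‖U‖_F⁶ − 2‖Y‖_F‖U‖_F⁴. -/
set_option maxHeartbeats 1000000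

open Matrix

namespace SymFactAux

lemma sum_sq_eq_trace {m k : ℕ} (A : Matrix (Fin m) (Fin k) ℝ) :
    ∑ i, ∑ j, A i j ^ 2 = Matrix.trace (Aᵀ * A) := by
  simp only [Matrix.trace, Matrix.diag, Matrix.mul_apply, Matrix.transpose_apply, sq]
  exact Finset.sum_comm

lemma sum_mul_eq_trace {m k : ℕ} (A B : Matrix (Fin m) (Fin k) ℝ) :
    ∑ i, ∑ j, A i j * B i j = Matrix.trace (Aᵀ * B) := by
  simp only [Matrix.trace, Matrix.diag, Matrix.mul_apply, Matrix.transpose_apply]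
  exact Finset.sum_comm

lemma frob_cs {m k : ℕ} (A B : Matrix (Fin m) (Fin k) ℝ) :
    (∑ i, ∑ j, A i j * B i j) ^ 2 ≤ (∑ i, ∑ j, A i j ^ 2) * (∑ i, ∑ j, B i j ^ 2) := by
  have h := Finset.sum_mul_sq_le_sq_mul_sq Finset.univ
    (fun p : Fin m × Fin k => A p.1 p.2) (fun p => B p.1 p.2)
  simpa [Fintype.sum_prod_type] using h

lemma frob_submul {m k l : ℕ} (A : Matrix (Fin m) (Fin k) ℝ) (B : Matrix (Fin k) (Fin l) ℝ) :
    ∑ i, ∑ j, (A * B) i j ^ 2 ≤ (∑ i, ∑ j, A i j ^ 2) * (∑ i, ∑ j, B i j ^ 2) := by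
  have h1 : ∀ i j, (A * B) i j ^ 2 ≤ (∑ t, A i t ^ 2) * (∑ t, B t j ^ 2) := by
    intro i j
    have := Finset.sum_mul_sq_le_sq_mul_sq Finset.univ (fun t => A i t) (fun t => B t j)
    simpa [Matrix.mul_apply] using this
  calc ∑ i, ∑ j, (A * B) i j ^ 2
      ≤ ∑ i, ∑ j, (∑ t, A i t ^ 2) * (∑ t, B t j ^ 2) :=
        Finset.sum_le_sum fun i _ => Finset.sum_le_sum fun j _ => h1 i j
    _ = (∑ i, ∑ t, A i t ^ 2) * (∑ j, ∑ t, B t j ^ 2) := (Finset.sum_mul_sum _ _ _ _).symm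
    _ = (∑ i, ∑ t, A i t ^ 2) * (∑ t, ∑ j, B t j ^ 2) := by
        congr 1; exact Finset.sum_comm

end SymFactAux

/-- Symmetric matrix factorization gradient norm lower bound:
`‖(UUᵀ − Y)U‖_F² ≥ (1/n²)‖U‖_F⁶ − 2‖Y‖_F‖U‖_F⁴` for symmetric `Y`. -/
theorem symmetric_factorization_gradient_lower_bound (n r : ℕ)
    (Y : Matrix (Fin n) (Fin n) ℝ) (hY : Y.IsSymm)
    (U : Matrix (Fin n) (Fin r) ℝ) :
    ∑ i, ∑ j, ((U * Uᵀ - Y) * U) i j ^ 2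
      ≥ (1 / (n : ℝ) ^ 2) * (Real.sqrt (∑ i, ∑ j, U i j ^ 2)) ^ 6
        - 2 * Real.sqrt (∑ i, ∑ j, Y i j ^ 2) * (Real.sqrt (∑ i, ∑ j, U i j ^ 2)) ^ 4 := by
  classical
  set u : ℝ := ∑ i, ∑ j, U i j ^ 2 with hu_def
  set y : ℝ := ∑ i, ∑ j, Y i j ^ 2 with hy_def
  have hu : 0 ≤ u := Finset.sum_nonneg fun _ _ => Finset.sum_nonneg fun _ _ => sq_nonneg _
  have hy : 0 ≤ y := Finset.sum_nonneg fun _ _ => Finset.sum_nonneg fun _ _ => sq_nonneg _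
  set M : Matrix (Fin n) (Fin r) ℝ := U * Uᵀ * U with hM_def
  set N : Matrix (Fin n) (Fin r) ℝ := Y * U with hN_def
  set c3 : ℝ := ∑ i, ∑ j, M i j ^ 2 with hc3_def
  set nN : ℝ := ∑ i, ∑ j, N i j ^ 2 with hnN_def
  set cross : ℝ := ∑ i, ∑ j, M i j * N i j with hcross_def
  have hc3 : 0 ≤ c3 := Finset.sum_nonneg fun _ _ => Finset.sum_nonneg fun _ _ => sq_nonneg _
  have hnN : 0 ≤ nN := Finset.sum_nonneg fun _ _ => Finset.sum_nonneg fun _ _ => sq_nonneg _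
  -- expansion
  have hsub : (U * Uᵀ - Y) * U = M - N := Matrix.sub_mul _ _ _
  have hExp : ∑ i, ∑ j, ((U * Uᵀ - Y) * U) i j ^ 2 = c3 - 2 * cross + nN := by
    rw [hsub]
    have h1 : ∀ i j, (M - N) i j ^ 2 = M i j ^ 2 - 2 * (M i j * N i j) + N i j ^ 2 := by
      intro i j; simp only [Matrix.sub_apply]; ring
    simp_rw [h1, Finset.sum_add_distrib, Finset.sum_sub_distrib, ← Finset.mul_sum]
    rfl
  -- ‖Uᵀ‖² = u
  have hUT : ∑ i, ∑ j, (Uᵀ) i j ^ 2 = u := by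
    simp only [Matrix.transpose_apply]
    exact Finset.sum_comm
  -- c2' = ‖UUᵀ‖²
  set c2 : ℝ := ∑ i, ∑ j, (U * Uᵀ) i j ^ 2 with hc2_def
  have hc2u : c2 ≤ u * u := by
    have := SymFactAux.frob_submul U Uᵀ
    rwa [hUT] at this
  have hc2nonneg : 0 ≤ c2 := Finset.sum_nonneg fun _ _ => Finset.sum_nonneg fun _ _ => sq_nonneg _
  -- c3 ≤ u³
  have hc3u : c3 ≤ u * u * u := by
    have h := SymFactAux.frob_submul (U * Uᵀ) U
    calc c3 ≤ c2 * u := h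
      _ ≤ (u * u) * u := mul_le_mul_of_nonneg_right hc2u hu
  -- nN ≤ y * u
  have hnNy : nN ≤ y * u := SymFactAux.frob_submul Y U
  -- cross bound
  have hcross : cross ≤ Real.sqrt y * u ^ 2 := by
    have h1 : cross ^ 2 ≤ c3 * nN := SymFactAux.frob_cs M N
    have h2 : cross ^ 2 ≤ y * (u ^ 2) ^ 2 := by
      calc cross ^ 2 ≤ c3 * nN := h1
        _ ≤ (u * u * u) * (y * u) := mul_le_mul hc3u hnNy hnN (by positivity)
        _ = y * (u ^ 2) ^ 2 := by ring
    calc cross ≤ |cross| := le_abs_self _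
      _ = Real.sqrt (cross ^ 2) := (Real.sqrt_sq_eq_abs _).symm
      _ ≤ Real.sqrt (y * (u ^ 2) ^ 2) := Real.sqrt_le_sqrt h2
      _ = Real.sqrt y * u ^ 2 := by
          rw [Real.sqrt_mul hy, Real.sqrt_sq (sq_nonneg u)]
  -- lower bound for c3
  have hc3low : (1 / (n : ℝ) ^ 2) * u ^ 3 ≤ c3 := by
    rcases eq_or_lt_of_le hu with h0 | hupos
    · rw [← h0]; simp [hc3]
    · have hn : 0 < n := by
        rcases Nat.eq_zero_or_pos n with h | h
        · exfalso; subst h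
          have : u = 0 := by simp [hu_def]
          rw [this] at hupos; exact lt_irrefl 0 hupos
        · exact h
      have hnR : (0:ℝ) < (n:ℝ) ^ 2 := by positivity
      -- trace of UUᵀ diag equals u
      have hdiag : ∑ i, (U * Uᵀ) i i = u := by
        simp only [Matrix.mul_apply, Matrix.transpose_apply, sq, hu_def]
      -- u² ≤ n * Σ diag²
      have hd1 : u ^ 2 ≤ (n : ℝ) * ∑ i, (U * Uᵀ) i i ^ 2 := by
        have h := Finset.sum_mul_sq_le_sq_mul_sq Finset.univ
          (fun i : Fin n => (U * Uᵀ) i i) (fun _ => (1:ℝ))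
        simp only [mul_one, one_pow, Finset.sum_const, Finset.card_univ,
          Fintype.card_fin, nsmul_eq_mul] at h
        rw [hdiag] at h
        calc u ^ 2 ≤ (∑ i, (U * Uᵀ) i i ^ 2) * (n:ℝ) := h
          _ = (n : ℝ) * ∑ i, (U * Uᵀ) i i ^ 2 := mul_comm _ _
      have hd2 : ∑ i, (U * Uᵀ) i i ^ 2 ≤ c2 := by
        refine Finset.sum_le_sum fun i _ => ?_
        exact Finset.single_le_sum (f := fun j => (U * Uᵀ) i j ^ 2)
          (fun j _ => sq_nonneg _) (Finset.mem_univ i)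
      have hd3 : u ^ 2 ≤ (n : ℝ) * c2 := by
        calc u ^ 2 ≤ (n : ℝ) * ∑ i, (U * Uᵀ) i i ^ 2 := hd1
          _ ≤ (n : ℝ) * c2 := by
              exact mul_le_mul_of_nonneg_left hd2 (by positivity)
      -- c2 = ⟨U, M⟩
      have hc2M : c2 = ∑ i, ∑ j, U i j * M i j := by
        rw [hc2_def, SymFactAux.sum_sq_eq_trace, SymFactAux.sum_mul_eq_trace]
        rw [Matrix.transpose_mul, Matrix.transpose_transpose]
        rw [hM_def, Matrix.trace_mul_comm (Uᵀ) (U * Uᵀ * U), ← Matrix.mul_assoc]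
      have hd4 : c2 ^ 2 ≤ u * c3 := by
        rw [hc2M]; exact SymFactAux.frob_cs U M
      -- u⁴ ≤ n² u c3
      have hd5 : u ^ 4 ≤ (n:ℝ) ^ 2 * (u * c3) := by
        calc u ^ 4 = (u ^ 2) ^ 2 := by ring
          _ ≤ ((n:ℝ) * c2) ^ 2 := by
              have hnn : (0:ℝ) ≤ u ^ 2 := sq_nonneg u
              nlinarith [hd3, hc2nonneg, hn.le]
          _ = (n:ℝ) ^ 2 * c2 ^ 2 := by ring
          _ ≤ (n:ℝ) ^ 2 * (u * c3) := mul_le_mul_of_nonneg_left hd4 (by positivity)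
      have hd6 : u ^ 3 ≤ (n:ℝ) ^ 2 * c3 := by
        have h7 : u * u ^ 3 ≤ u * ((n:ℝ) ^ 2 * c3) := by
          calc u * u ^ 3 = u ^ 4 := by ring
            _ ≤ (n:ℝ) ^ 2 * (u * c3) := hd5
            _ = u * ((n:ℝ) ^ 2 * c3) := by ring
        exact le_of_mul_le_mul_left h7 hupos
      rw [one_div, inv_mul_le_iff₀ hnR]
      exact hd6
  -- sqrt powers
  have h6 : Real.sqrt u ^ 6 = u ^ 3 := by
    have : Real.sqrt u ^ 6 = (Real.sqrt u ^ 2) ^ 3 := by ring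
    rw [this, Real.sq_sqrt hu]
  have h4 : Real.sqrt u ^ 4 = u ^ 2 := by
    have : Real.sqrt u ^ 4 = (Real.sqrt u ^ 2) ^ 2 := by ring
    rw [this, Real.sq_sqrt hu]
  rw [ge_iff_le, hExp, h6, h4]
  have : c3 - 2 * cross + nN ≥ c3 - 2 * (Real.sqrt y * u ^ 2) := by
    have := hcross
    nlinarith [hnN]
  linarith [hc3low, this]
end

section
/- Let Q(w, z) = z·(4w² − 16.4w + 16) with constraints w = exp(z) and z = r² ≥ 0 (so w ≥ 1). Then Q(w, z) > −0.8 for all r ≥ 0; in particular 4w² − 16.4w + 16 is negative only for 1.6 < w < 2.5, attains minimum −0.81 at w = 2.05, and z < ln(2.5) on that range so Q > −0.81·ln(2.5) > −0.8. -/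
lemma log_25_lt : Real.log 2.5 < 80/81 := by
  have h1 : ((1:ℝ) + 10/81) ≤ Real.exp (10/81) := by have := Real.add_one_le_exp (10/81:ℝ); linarith
  have h2 : ((1:ℝ) + 10/81) ^ 8 ≤ Real.exp (10/81) ^ 8 :=
    pow_le_pow_left₀ (by norm_num) h1 8
  have h3 : Real.exp (80/81) = Real.exp (10/81) ^ 8 := by
    rw [← Real.exp_nat_mul]; norm_num
  have h4 : (2.5:ℝ) < ((1:ℝ) + 10/81) ^ 8 := by norm_num
  have h5 : (2.5:ℝ) < Real.exp (80/81) := by linarith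
  have h6 := Real.log_lt_log (by norm_num : (0:ℝ) < 2.5) h5
  rwa [Real.log_exp] at h6

lemma quad_iff (w : ℝ) : 4 * w ^ 2 - 16.4 * w + 16 < 0 ↔ 1.6 < w ∧ w < 2.5 := by
  constructor
  · intro h
    constructor
    · nlinarith [sq_nonneg (w - 2.5)]
    · nlinarith [sq_nonneg (w - 1.6)]
  · rintro ⟨h1, h2⟩
    nlinarith

lemma quad_min (w : ℝ) : 4 * w ^ 2 - 16.4 * w + 16 ≥ -0.81 := by
  nlinarith [sq_nonneg (w - 2.05)]

/-- With `Q(w,z) = z(4w² − 16.4w + 16)`, `w = exp(z)`, `z = r² ≥ 0`: `Q > −0.8` for all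
`r ≥ 0`; the quadratic is negative exactly for `1.6 < w < 2.5`, attains its minimum
`−0.81` at `w = 2.05`, and `−0.81·ln(2.5) > −0.8`. -/
theorem Q_lower_bound :
    (∀ r : ℝ, 0 ≤ r →
      r ^ 2 * (4 * Real.exp (r ^ 2) ^ 2 - 16.4 * Real.exp (r ^ 2) + 16) > -0.8) ∧
    (∀ w : ℝ, 4 * w ^ 2 - 16.4 * w + 16 < 0 ↔ 1.6 < w ∧ w < 2.5) ∧
    (∀ w : ℝ, 4 * w ^ 2 - 16.4 * w + 16 ≥ -0.81) ∧
    (4 * (2.05 : ℝ) ^ 2 - 16.4 * 2.05 + 16 = -0.81) ∧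
    (-0.81 * Real.log 2.5 > (-0.8 : ℝ)) := by
  have hlog : Real.log 2.5 < 80/81 := log_25_lt
  refine ⟨?_, quad_iff, quad_min, by norm_num, by nlinarith⟩
  intro r hr
  set z := r ^ 2 with hz
  have hz0 : 0 ≤ z := sq_nonneg r
  set w := Real.exp z with hw
  set q := 4 * w ^ 2 - 16.4 * w + 16 with hq
  have hq0' : 0 < w := hw ▸ Real.exp_pos z
  clear_value z w q
  rcases le_or_gt 0 q with hq0 | hq0
  · have : 0 ≤ z * q := mul_nonneg hz0 hq0
    linarith
  · have hw25 : w < 2.5 := ((quad_iff w).mp (hq ▸ hq0)).2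
    have hzlt : z < Real.log 2.5 := by
      have h := Real.log_lt_log (Real.exp_pos z) (hw ▸ hw25)
      rwa [Real.log_exp] at h
    have hqmin : q ≥ -0.81 := hq ▸ quad_min w
    have h1 : z * q ≥ -0.81 * z := by nlinarith
    have h2 : -0.81 * z > -0.81 * Real.log 2.5 := by nlinarith
    nlinarith
end
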